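/- For any monomial ideal I in K[x_1,...,x_n] and any integer k ≥ 2, the power I^k is strongly d-Golod: for all monomials u, v ∈ I^k and indices i, j with x_i | u and x_j | v, one has uv/(x_i x_j) ∈ I^k. -/

import Mathlib

/-- An ideal of `K[x_1,…,x_n]` is a monomial ideal if with each polynomial it contains
all the monomials in its support. -/
def IsMonomialIdeal {K : Type*} [Field K] {n : ℕ}
    (I : Ideal (MvPolynomial (Fin n) K)) : Prop :=
  ∀ f ∈ I, ∀ m ∈ f.support, MvPolynomial.monomial m (1 : K) ∈ I

/-- A monomial ideal `L` of `K[x_1,…,x_n]` is strongly d-Golod if for all monomials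
`u, v ∈ L` and all variables `x_i ∣ u`, `x_j ∣ v`, one has `uv/(x_i x_j) ∈ L`. -/
def StronglyDGolod {K : Type*} [Field K] {n : ℕ}
    (L : Ideal (MvPolynomial (Fin n) K)) : Prop :=
  ∀ a b : Fin n →₀ ℕ, MvPolynomial.monomial a (1 : K) ∈ L →
    MvPolynomial.monomial b (1 : K) ∈ L →
    ∀ i j : Fin n, a i ≠ 0 → b j ≠ 0 →
      MvPolynomial.monomial (a + b - Finsupp.single i 1 - Finsupp.single j 1) (1 : K) ∈ L

open MvPolynomial in
lemma mem_span_monomials_iff {K : Type*} [Field K] {n : ℕ} {T : Set (Fin n →₀ ℕ)}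
    {a : Fin n →₀ ℕ} :
    (monomial a (1:K) ∈ Ideal.span ((fun m => monomial m (1:K)) '' T)) ↔ ∃ m ∈ T, m ≤ a := by
  constructor
  · intro h
    rw [Ideal.span, Submodule.mem_span_set] at h
    obtain ⟨c, hsupp, hsum⟩ := h
    by_contra hcon
    push_neg at hcon
    have h1 : MvPolynomial.coeff a (c.sum fun mi r => r • mi) = 1 := by
      rw [hsum, coeff_monomial, if_pos rfl]
    rw [Finsupp.sum, MvPolynomial.coeff_sum] at h1
    have hz : ∀ p ∈ c.support, MvPolynomial.coeff a (c p • p) = 0 := by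
      intro p hp
      obtain ⟨m, hm, rfl⟩ := hsupp hp
      rw [smul_eq_mul, coeff_mul_monomial', if_neg (hcon m hm)]
    rw [Finset.sum_eq_zero hz] at h1
    exact one_ne_zero h1.symm
  · rintro ⟨m, hm, hle⟩
    have h2 : monomial a (1:K) = monomial (a - m) (1:K) * monomial m 1 := by
      rw [monomial_mul, one_mul, tsub_add_cancel_of_le hle]
    rw [h2]
    exact Ideal.mul_mem_left _ _ (Ideal.subset_span ⟨m, hm, rfl⟩)

open MvPolynomial in
lemma monomialIdeal_eq_span {K : Type*} [Field K] {n : ℕ}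
    {I : Ideal (MvPolynomial (Fin n) K)} (hI : IsMonomialIdeal I) :
    I = Ideal.span ((fun m => monomial m (1:K)) '' {m | monomial m (1:K) ∈ I}) := by
  apply le_antisymm
  · intro f hf
    rw [MvPolynomial.as_sum f]
    apply Ideal.sum_mem
    intro m hm
    have h2 : (monomial m) (coeff m f) = C (coeff m f) * monomial m (1:K) := by
      rw [C_mul_monomial, mul_one]
    rw [h2]
    exact Ideal.mul_mem_left _ _ (Ideal.subset_span ⟨m, hI f hf m hm, rfl⟩)
  · rw [Ideal.span_le]
    rintro p ⟨m, hm, rfl⟩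
    exact hm

open MvPolynomial in
lemma pow_monomialIdeal_eq_span {K : Type*} [Field K] {n : ℕ}
    {I : Ideal (MvPolynomial (Fin n) K)} (hI : IsMonomialIdeal I) (k : ℕ) :
    I ^ k = Ideal.span ((fun m => monomial m (1:K)) ''
      {m | ∃ f : Fin k → (Fin n →₀ ℕ), (∀ t, monomial (f t) (1:K) ∈ I) ∧ ∑ t, f t = m}) := by
  induction k with
  | zero =>
    rw [pow_zero, Ideal.one_eq_top]
    symm
    rw [Ideal.eq_top_iff_one]
    have h0 : (1 : MvPolynomial (Fin n) K) = monomial 0 1 := by simp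
    rw [h0]
    exact Ideal.subset_span ⟨0, ⟨fun _ => 0, fun t => t.elim0, by simp⟩, rfl⟩
  | succ k ih =>
    rw [pow_succ, ih]
    nth_rewrite 2 [monomialIdeal_eq_span hI]
    rw [Ideal.span_mul_span]
    apply le_antisymm
    · rw [Ideal.span_le]
      intro x hx
      simp only [Set.mem_iUnion, Set.mem_image, Set.mem_setOf_eq, Set.mem_singleton_iff, Set.mem_mul] at hx
      obtain ⟨p, ⟨m1, ⟨f, hf, hsum⟩, rfl⟩, q, ⟨m2, hm2, rfl⟩, rfl⟩ := hx
      apply Ideal.subset_span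
      refine ⟨m1 + m2, ⟨Fin.snoc f m2, ?_, ?_⟩, ?_⟩
      · intro t
        refine Fin.lastCases ?_ ?_ t
        · rw [Fin.snoc_last]; exact hm2
        · intro t'; rw [Fin.snoc_castSucc]; exact hf t'
      · rw [Fin.sum_univ_castSucc]
        simp only [Fin.snoc_castSucc, Fin.snoc_last, hsum]
      · rw [monomial_mul, one_mul]
    · rw [Ideal.span_le]
      rintro x ⟨m, ⟨f, hf, rfl⟩, rfl⟩
      apply Ideal.subset_span
      simp only [Set.mem_iUnion, Set.mem_image, Set.mem_setOf_eq, Set.mem_singleton_iff]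
      refine ⟨monomial (∑ i : Fin k, f i.castSucc) 1,
        ⟨∑ i : Fin k, f i.castSucc, ⟨fun i => f i.castSucc, fun i => hf _, rfl⟩, rfl⟩,
        monomial (f (Fin.last k)) 1, ⟨f (Fin.last k), hf _, rfl⟩, ?_⟩
      beta_reduce
      rw [monomial_mul, one_mul, ← Fin.sum_univ_castSucc]

open MvPolynomial in
lemma mono_mem_pow_iff {K : Type*} [Field K] {n : ℕ}
    {I : Ideal (MvPolynomial (Fin n) K)} (hI : IsMonomialIdeal I) {k : ℕ} {a : Fin n →₀ ℕ} :
    monomial a (1:K) ∈ I ^ k ↔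
      ∃ f : Fin k → (Fin n →₀ ℕ), (∀ t, monomial (f t) (1:K) ∈ I) ∧ ∑ t, f t ≤ a := by
  rw [pow_monomialIdeal_eq_span hI, mem_span_monomials_iff]
  constructor
  · rintro ⟨m, ⟨f, hf, rfl⟩, hle⟩
    exact ⟨f, hf, hle⟩
  · rintro ⟨f, hf, hle⟩
    exact ⟨∑ t, f t, ⟨f, hf, rfl⟩, hle⟩

/-- For any monomial ideal `I` of `K[x_1,…,x_n]` and any `k ≥ 2`, the power `I^k` is
strongly d-Golod. -/
theorem stronglyDGolod_pow {K : Type*} [Field K] {n : ℕ}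
    (I : Ideal (MvPolynomial (Fin n) K)) (hI : IsMonomialIdeal I)
    (k : ℕ) (hk : 2 ≤ k) :
    StronglyDGolod (I ^ k) := by
  intro a b ha hb i j hai hbj
  obtain ⟨f, hfI, hfa⟩ := (mono_mem_pow_iff hI).1 ha
  obtain ⟨g, hgI, hgb⟩ := (mono_mem_pow_iff hI).1 hb
  have hk0 : 0 < k := by omega
  haveI : Nonempty (Fin k) := ⟨⟨0, hk0⟩⟩
  obtain ⟨t0, -, hmax⟩ := Finset.exists_max_image Finset.univ (fun t => f t i) Finset.univ_nonempty
  obtain ⟨s0, -, hmin⟩ := Finset.exists_min_image Finset.univ (fun s => g s j) Finset.univ_nonempty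
  apply (mono_mem_pow_iff hI).2
  refine ⟨Function.update f t0 (g s0), ?_, ?_⟩
  · intro t
    rcases eq_or_ne t t0 with rfl | ht
    · rw [Function.update_self]; exact hgI s0
    · rw [Function.update_of_ne ht]; exact hfI t
  · rw [Finset.sum_update_of_mem (Finset.mem_univ t0), Finsupp.le_def]
    intro l
    have hfa' := Finsupp.le_def.1 hfa l
    have hgb' := Finsupp.le_def.1 hgb l
    rw [Finset.sum_apply'] at hfa' hgb'
    rw [Finsupp.add_apply, Finset.sum_apply', Finsupp.tsub_apply, Finsupp.tsub_apply,
      Finsupp.add_apply, Finsupp.single_apply, Finsupp.single_apply]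
    have hsplit : ∑ x ∈ Finset.univ \ {t0}, f x l + f t0 l = ∑ t, f t l :=
      (Finset.sum_eq_sum_sdiff_singleton_add (Finset.mem_univ t0) _).symm
    have hA : ∑ x ∈ Finset.univ \ {t0}, f x l + f t0 l ≤ a l := hsplit ▸ hfa'
    have hgs : g s0 l ≤ b l :=
      le_trans (Finset.single_le_sum (f := fun s => g s l) (fun s _ => Nat.zero_le _) (Finset.mem_univ s0)) hgb'
    have hAi : i = l → ∑ x ∈ Finset.univ \ {t0}, f x l + 1 ≤ a l := by
      rintro rfl
      by_cases h0 : f t0 i = 0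
      · have hz : ∑ x ∈ Finset.univ \ {t0}, f x i = 0 :=
          Finset.sum_eq_zero (fun x _ => Nat.le_zero.mp (h0 ▸ hmax x (Finset.mem_univ x)))
        omega
      · omega
    have hBj : j = l → g s0 l + 1 ≤ b l := by
      rintro rfl
      by_cases h0 : g s0 j = 0
      · omega
      · obtain ⟨s1, hs1⟩ := Fintype.exists_ne_of_one_lt_card (by simp; omega) s0
        have h2 : g s0 j + g s1 j ≤ ∑ s, g s j := by
          have h3 := Finset.sum_le_sum_of_subset (f := fun s => g s j)
            (Finset.subset_univ ({s0, s1} : Finset (Fin k)))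
          rwa [Finset.sum_pair (Ne.symm hs1)] at h3
        have h4 := hmin s1 (Finset.mem_univ s1)
        omega
    by_cases hil : i = l
    · by_cases hjl : j = l
      · rw [if_pos hil, if_pos hjl]
        have h5 := hAi hil
        have h6 := hBj hjl
        omega
      · rw [if_pos hil, if_neg hjl]
        have h5 := hAi hil
        omega
    · by_cases hjl : j = l
      · rw [if_neg hil, if_pos hjl]
        have h6 := hBj hjl
        omega
      · rw [if_neg hil, if_neg hjl]
        omega
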